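/- Let (Γ, ⪯) be a left-ordered group admitting a crossing, and let 1 ⪯ h₁ ≺ h₂ be elements of Γ such that h₁ ∈ S and h₂ ∉ S. Then there exists a crossing (f', g', u', v', w') for (Γ, ⪯) such that h₁ ≺ u' ≺ v' ≺ h₂. -/

import Mathlib

/-- A crossing for a left-ordered group `(Γ, ≤)`. -/
def IsCrossing {Γ : Type*} [Group Γ] [LinearOrder Γ] (f g u v w : Γ) : Prop :=
  u < w ∧ w < v ∧
  (∀ n : ℕ, 0 < n → g ^ n * u < v ∧ u < f ^ n * v) ∧
  ∃ M N : ℕ, 0 < M ∧ 0 < N ∧ f ^ N * v < w ∧ w < g ^ M * u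

/-- The set `S = {1} ∪ S⁺ ∪ S⁻`. -/
def ConradSet (Γ : Type*) [Group Γ] [LinearOrder Γ] : Set Γ :=
  {1} ∪
  {h : Γ | 1 < h ∧ ∀ f g u v w : Γ, IsCrossing f g u v w → 1 ≤ u → h ≤ w} ∪
  {h : Γ | h < 1 ∧ ∀ f g u v w : Γ, IsCrossing f g u v w → v ≤ 1 → w ≤ h}

section Aux

variable {Γ : Type*} [Group Γ] [LinearOrder Γ] [CovariantClass Γ Γ (· * ·) (· ≤ ·)]

/-- The shrinking lemma: from suitable order data on `P, Q, u, v, w` we produce a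
crossing `(P*Q, Q*P, P*(Q*u), Q*(P*v), w)`. -/
theorem crossing_shrink (P Q u v w : Γ)
    (h1 : u < w) (h2 : w < v)
    (h3 : P * v < w) (h4 : w < Q * u) (h5 : Q * u < v)
    (h6 : Q * (Q * u) < v) (h7 : Q * (Q * (Q * u)) < v)
    (h8 : u < P * v) (h9 : u < P * (P * v)) (h10 : u < P * (P * (P * v))) :
    IsCrossing (P * Q) (Q * P) (P * (Q * u)) (Q * (P * v)) w := by
  have hu'w : P * (Q * u) < w := lt_trans (mul_lt_mul_right h5 P) h3
  have hwv' : w < Q * (P * v) := lt_trans h4 (mul_lt_mul_right h8 Q)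
  have hv'v : Q * (P * v) < v := lt_trans (mul_lt_mul_right (lt_trans h3 h4) Q) h6
  have huu' : u < P * (Q * u) :=
    lt_trans (lt_trans h9 (mul_lt_mul_right h3 P)) (mul_lt_mul_right h4 P)
  -- orbit bounds
  have c1 : ∀ k : ℕ, (Q * P) ^ k * (P * (Q * u)) < v := by
    intro k
    induction k with
    | zero => simpa using lt_trans hu'w h2
    | succ k ih =>
      rw [pow_succ', mul_assoc, mul_assoc]
      calc Q * (P * ((Q * P) ^ k * (P * (Q * u))))
          < Q * (P * v) := mul_lt_mul_right (mul_lt_mul_right ih P) Q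
        _ < v := hv'v
  have c2 : ∀ k : ℕ, u < (P * Q) ^ k * (Q * (P * v)) := by
    intro k
    induction k with
    | zero => simpa using lt_trans h1 hwv'
    | succ k ih =>
      rw [pow_succ', mul_assoc, mul_assoc]
      calc u < P * (Q * u) := huu'
        _ < P * (Q * ((P * Q) ^ k * (Q * (P * v)))) :=
            mul_lt_mul_right (mul_lt_mul_right ih Q) P
  refine ⟨hu'w, hwv', ?_, 1, 1, Nat.one_pos, Nat.one_pos, ?_, ?_⟩
  · intro n hn
    obtain ⟨k, rfl⟩ : ∃ k, n = k + 1 := ⟨n - 1, (Nat.succ_pred_eq_of_pos hn).symm⟩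
    constructor
    · rw [pow_succ', mul_assoc, mul_assoc]
      exact mul_lt_mul_right (mul_lt_mul_right (c1 k) P) Q
    · rw [pow_succ', mul_assoc, mul_assoc]
      exact mul_lt_mul_right (mul_lt_mul_right (c2 k) Q) P
  · -- (P*Q)^1 * (Q*(P*v)) < w
    rw [pow_one, mul_assoc]
    have s1 : Q * (P * v) < Q * (Q * u) := mul_lt_mul_right (lt_trans h3 h4) Q
    have s2 : Q * (Q * (P * v)) < v := lt_trans (mul_lt_mul_right s1 Q) h7
    exact lt_trans (mul_lt_mul_right s2 P) h3
  · -- w < (Q*P)^1 * (P*(Q*u))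
    rw [pow_one, mul_assoc]
    have s1 : P * (P * v) < P * (Q * u) := mul_lt_mul_right (lt_trans h3 h4) P
    have s2 : u < P * (P * (Q * u)) := lt_trans h10 (mul_lt_mul_right s1 P)
    exact lt_trans h4 (mul_lt_mul_right s2 Q)

end Aux

/-- If `(Γ, ≤)` admits a crossing and `1 ≤ h₁ < h₂` with `h₁ ∈ S` and `h₂ ∉ S`,
then there is a crossing `(f', g', u', v', w')` with `h₁ < u' < v' < h₂`. -/
theorem crossing_between {Γ : Type*} [Group Γ] [LinearOrder Γ]
    [CovariantClass Γ Γ (· * ·) (· ≤ ·)]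
    (hex : ∃ f g u v w : Γ, IsCrossing f g u v w)
    (h₁ h₂ : Γ) (h₁pos : 1 ≤ h₁) (hlt : h₁ < h₂)
    (h₁S : h₁ ∈ ConradSet Γ) (h₂S : h₂ ∉ ConradSet Γ) :
    ∃ f' g' u' v' w' : Γ, IsCrossing f' g' u' v' w' ∧
      h₁ < u' ∧ u' < v' ∧ v' < h₂ := by
  clear hex
  have h₂pos : 1 < h₂ := lt_of_le_of_lt h₁pos hlt
  -- extract a crossing with 1 ≤ u and w < h₂ from h₂ ∉ S
  obtain ⟨f, g, u, v, w, hc, hu1, hwh₂⟩ :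
      ∃ f g u v w : Γ, IsCrossing f g u v w ∧ 1 ≤ u ∧ w < h₂ := by
    by_contra hcon
    push_neg at hcon
    apply h₂S
    refine Or.inl (Or.inr ⟨h₂pos, ?_⟩)
    intro f g u v w hc hu
    exact hcon f g u v w hc hu
  obtain ⟨huw, hwv, horb, M, N, hM, hN, hfN, hgM⟩ := hc
  -- basic facts about the f-orbit of v
  have hfv : f * v < v := by
    by_contra hcon
    push_neg at hcon
    have : ∀ k : ℕ, v ≤ f ^ k * v := by
      intro k
      induction k with
      | zero => simp
      | succ k ih =>
        calc v ≤ f ^ k * v := ih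
          _ ≤ f ^ k * (f * v) := mul_le_mul_right hcon _
          _ = f ^ (k + 1) * v := by rw [pow_succ, mul_assoc]
    exact absurd (lt_trans hfN hwv) (not_lt.mpr (this N))
  have hfkv : ∀ k : ℕ, 0 < k → f ^ k * v < v := by
    intro k hk
    induction k with
    | zero => exact absurd hk (lt_irrefl 0)
    | succ k ih =>
      rcases Nat.eq_zero_or_pos k with rfl | hk'
      · simpa using hfv
      · calc f ^ (k + 1) * v = f ^ k * (f * v) := by rw [pow_succ, mul_assoc]
          _ < f ^ k * v := mul_lt_mul_right hfv _
          _ < v := ih hk'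
  -- (f, g, u, v, f^(3N) * v) is a crossing, hence h₁ ≤ f^(3N) * v
  have h3Nw : f ^ (3 * N) * v < w := by
    have : f ^ (3 * N) * v = f ^ N * (f ^ (2 * N) * v) := by
      rw [← mul_assoc, ← pow_add]; ring_nf
    rw [this]
    calc f ^ N * (f ^ (2 * N) * v) < f ^ N * v :=
          mul_lt_mul_right (hfkv (2 * N) (by positivity)) _
      _ < w := hfN
  have hcross3N : IsCrossing f g u v (f ^ (3 * N) * v) := by
    refine ⟨(horb (3 * N) (by positivity)).2, lt_trans h3Nw hwv, horb,
      M, 3 * N + 1, hM, Nat.succ_pos _, ?_, lt_trans h3Nw hgM⟩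
    calc f ^ (3 * N + 1) * v = f ^ (3 * N) * (f * v) := by rw [pow_succ, mul_assoc]
      _ < f ^ (3 * N) * v := mul_lt_mul_right hfv _
  have hh₁ : h₁ ≤ f ^ (3 * N) * v := by
    rcases h₁S with (h | h) | h
    · rw [Set.mem_singleton_iff] at h
      rw [h]
      exact le_trans hu1 (le_of_lt (horb (3 * N) (by positivity)).2)
    · exact h.2 f g u v (f ^ (3 * N) * v) hcross3N hu1
    · exact le_trans (le_of_lt h.1) (le_trans hu1 (le_of_lt (horb (3 * N) (by positivity)).2))
  -- apply the shrinking lemma to the f^N-translate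
  set P : Γ := f ^ N with hP
  set Q : Γ := P * g ^ M * P⁻¹ with hQ
  have hQmul : ∀ a : Γ, Q * (P * a) = P * (g ^ M * a) := by
    intro a; rw [hQ]; simp [mul_assoc]
  have hgMM : g ^ (M + M) * u < v := (horb (M + M) (by positivity)).1
  have hgMMM : g ^ (M + (M + M)) * u < v := (horb (M + (M + M)) (by positivity)).1
  have hgg : g ^ M * (g ^ M * u) = g ^ (M + M) * u := by rw [pow_add, mul_assoc]
  have hggg : g ^ M * (g ^ M * (g ^ M * u)) = g ^ (M + (M + M)) * u := by
    rw [hgg, ← mul_assoc, ← pow_add]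
  have hfNN : u < f ^ (N + N) * v := (horb (N + N) (by positivity)).2
  have hfNNN : u < f ^ (N + (N + N)) * v := (horb (N + (N + N)) (by positivity)).2
  have hff : P * (P * v) = f ^ (N + N) * v := by rw [hP, pow_add, mul_assoc]
  have hfff : P * (P * (P * v)) = f ^ (N + (N + N)) * v := by
    rw [hP, hff, ← mul_assoc, ← pow_add]
  have key : IsCrossing (P * Q) (Q * P) (P * (Q * (P * u))) (Q * (P * (P * v))) (P * w) := by
    apply crossing_shrink
    · exact mul_lt_mul_right huw P
    · exact mul_lt_mul_right hwv P
    · rw [hff]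
      have : f ^ (N + N) * v = P * (f ^ N * v) := by rw [hP, pow_add, mul_assoc]
      rw [this]; exact mul_lt_mul_right hfN P
    · rw [hQmul]; exact mul_lt_mul_right hgM P
    · rw [hQmul]; exact mul_lt_mul_right (horb M hM).1 P
    · rw [hQmul, hQmul, hgg]; exact mul_lt_mul_right hgMM P
    · rw [hQmul, hQmul, hQmul, hggg]; exact mul_lt_mul_right hgMMM P
    · exact mul_lt_mul_right (horb N hN).2 P
    · rw [hfff]
      have e : f ^ (N + (N + N)) * v = P * (f ^ (N + N) * v) := by
        rw [hP, pow_add, mul_assoc]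
      rw [e]
      exact mul_lt_mul_right hfNN P
    · have e : P * (P * (P * (P * v))) = P * (f ^ (N + (N + N)) * v) := by
        rw [hfff]
      rw [e]
      exact mul_lt_mul_right hfNNN P
  refine ⟨P * Q, Q * P, P * (Q * (P * u)), Q * (P * (P * v)), P * w, key, ?_, ?_, ?_⟩
  · -- h₁ < u'
    have e1 : P * (Q * (P * u)) = P * (P * (g ^ M * u)) := by rw [hQmul]
    have e2 : f ^ (3 * N) * v = P * (P * (f ^ N * v)) := by rw [hP]; group
    rw [e1]
    calc h₁ ≤ f ^ (3 * N) * v := hh₁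
      _ = P * (P * (f ^ N * v)) := e2
      _ < P * (P * w) := mul_lt_mul_right (mul_lt_mul_right hfN P) P
      _ < P * (P * (g ^ M * u)) := mul_lt_mul_right (mul_lt_mul_right hgM P) P
  · exact lt_trans key.1 key.2.1
  · -- v' < h₂
    have e3 : Q * (P * (P * v)) = P * (g ^ M * (f ^ N * v)) := by
      rw [hQ, hP]; group
    rw [e3]
    have s1 : g ^ M * (f ^ N * v) < g ^ M * (g ^ M * u) :=
      mul_lt_mul_right (lt_trans hfN hgM) _
    have s2 : g ^ M * (f ^ N * v) < v := lt_trans s1 (by rw [hgg]; exact hgMM)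
    calc P * (g ^ M * (f ^ N * v)) < P * v := mul_lt_mul_right s2 P
      _ < w := hfN
      _ < h₂ := hwh₂
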